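/- Let f(z) = Σ_{k≥0} a_k z^k be a power series with a_k ∈ ℤ_p, a_k → 0, and not all a_k zero. Then f has only finitely many zeros in ℤ_p (Strassman's theorem). Consequently, if a ℤ_p-convergent power series vanishes at infinitely many points of ℤ_p, it is identically zero. -/

import Mathlib

open Filter

namespace Stmt7Aux

variable {p : ℕ} [hp : Fact p.Prime]

lemma norm_term_le (c z : ℤ_[p]) (k : ℕ) : ‖c * z ^ k‖ ≤ ‖c‖ := by
  calc ‖c * z ^ k‖ ≤ ‖c‖ * ‖z ^ k‖ := norm_mul_le _ _
    _ ≤ ‖c‖ * 1 := mul_le_mul_of_nonneg_left (PadicInt.norm_le_one _) (norm_nonneg _)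
    _ = ‖c‖ := mul_one _

lemma norm_term_le2 (c z w : ℤ_[p]) (i j : ℕ) : ‖c * z ^ i * w ^ j‖ ≤ ‖c‖ :=
  (norm_term_le (c * z ^ i) w j).trans (norm_term_le c z i)

lemma norm_tsum_le {t : ℕ → ℤ_[p]} {C : ℝ} (hC : 0 ≤ C) (h : ∀ i, ‖t i‖ ≤ C) :
    ‖∑' i, t i‖ ≤ C :=
  IsUltrametricDist.norm_tsum_le_of_forall_le_of_nonneg hC h

lemma norm_tsum_lt {c : ℤ_[p]} (hc : c ≠ 0) {t : ℕ → ℤ_[p]} (h : ∀ i, ‖t i‖ < ‖c‖) :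
    ‖∑' i, t i‖ < ‖c‖ := by
  have hv : ‖c‖ = (p : ℝ) ^ (-(c.valuation : ℤ)) := PadicInt.norm_eq_zpow_neg_valuation hc
  have h1 : ∀ i, ‖t i‖ ≤ (p : ℝ) ^ (-(c.valuation : ℤ) - 1) := fun i =>
    (PadicInt.norm_lt_pow_iff_norm_le_pow_sub_one _ _).mp (hv ▸ h i)
  have hp0 : (0 : ℝ) ≤ (p : ℝ) := by positivity
  have h2 : ‖∑' i, t i‖ ≤ (p : ℝ) ^ (-(c.valuation : ℤ) - 1) :=
    norm_tsum_le (zpow_nonneg hp0 _) h1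
  have hplt : (1 : ℝ) < p := by exact_mod_cast hp.1.one_lt
  calc ‖∑' i, t i‖ ≤ _ := h2
    _ < (p : ℝ) ^ (-(c.valuation : ℤ)) := zpow_lt_zpow_right₀ hplt (by omega)
    _ = ‖c‖ := hv.symm

lemma tendsto_shift {a : ℕ → ℤ_[p]} (ha : Tendsto (fun k => ‖a k‖) atTop (nhds 0)) (m : ℕ) :
    Tendsto (fun j => ‖a (m + j)‖) atTop (nhds 0) := by
  have h1 : Tendsto (fun j : ℕ => m + j) atTop atTop := by
    simpa [Nat.add_comm] using tendsto_add_atTop_nat m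
  exact ha.comp h1

lemma summable_term {a : ℕ → ℤ_[p]} (ha : Tendsto (fun k => ‖a k‖) atTop (nhds 0)) (z : ℤ_[p]) :
    Summable (fun k => a k * z ^ k) := by
  apply NonarchimedeanAddGroup.summable_of_tendsto_cofinite_zero
  rw [Nat.cofinite_eq_atTop]
  exact squeeze_zero_norm (fun k => norm_term_le _ _ _) ha

lemma summable_aux {a : ℕ → ℤ_[p]} (ha : Tendsto (fun k => ‖a k‖) atTop (nhds 0))
    (g : ℕ × ℕ → ℤ_[p]) (n : ℕ × ℕ → ℕ)
    (hb : ∀ x, g x = 0 ∨ (‖g x‖ ≤ ‖a (n x)‖ ∧ max x.1 x.2 ≤ n x)) :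
    Summable g := by
  apply NonarchimedeanAddGroup.summable_of_tendsto_cofinite_zero
  rw [Metric.tendsto_nhds]
  intro ε hε
  rw [eventually_cofinite]
  obtain ⟨K, hK⟩ := Metric.tendsto_atTop.mp ha ε hε
  have hK' : ∀ m, K ≤ m → ‖a m‖ < ε := by
    intro m hm
    have := hK m hm
    rwa [Real.dist_eq, sub_zero, abs_of_nonneg (norm_nonneg _)] at this
  apply Set.Finite.subset ((Set.finite_Iio K).prod (Set.finite_Iio K))
  intro x hx
  simp only [Set.mem_setOf_eq, not_lt] at hx
  rw [dist_zero_right] at hx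
  rcases hb x with h0 | ⟨hle, hmax⟩
  · rw [h0, norm_zero] at hx; exact absurd (lt_of_lt_of_le hε hx) (lt_irrefl _)
  · have hnx : n x < K := by
      by_contra hc
      exact absurd (lt_of_le_of_lt (le_trans hx hle) (hK' _ (le_of_not_gt hc))) (lt_irrefl _)
    constructor
    · exact lt_of_le_of_lt (le_trans (le_max_left _ _) hmax) hnx
    · exact lt_of_le_of_lt (le_trans (le_max_right _ _) hmax) hnx

lemma summable_inner {a : ℕ → ℤ_[p]} (ha : Tendsto (fun k => ‖a k‖) atTop (nhds 0))
    (i : ℕ) (z w : ℤ_[p]) : Summable (fun j => a (i + 1 + j) * z ^ i * w ^ j) := by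
  apply NonarchimedeanAddGroup.summable_of_tendsto_cofinite_zero
  rw [Nat.cofinite_eq_atTop]
  exact squeeze_zero_norm (fun j => norm_term_le2 _ _ _ _ _) (tendsto_shift ha (i + 1))

set_option maxHeartbeats 1000000 in
/-- Key factorization: f(z) - f(α) = (z - α) · g(z). -/
lemma factor {a : ℕ → ℤ_[p]} (ha : Tendsto (fun k => ‖a k‖) atTop (nhds 0)) (z α : ℤ_[p]) :
    (∑' k, a k * z ^ k) - (∑' k, a k * α ^ k)
      = (z - α) * ∑' i, (∑' j, a (i + 1 + j) * α ^ j) * z ^ i := by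
  set T : ℕ × ℕ → ℤ_[p] := fun x => a (x.1 + 1 + x.2) * z ^ x.1 * α ^ x.2 with hT_def
  set T' : ℕ × ℕ → ℤ_[p] :=
    fun x => if x.2 < x.1 then a x.1 * z ^ x.2 * α ^ (x.1 - 1 - x.2) else 0 with hT'_def
  have hT : Summable T := by
    apply summable_aux ha T (fun x => x.1 + 1 + x.2)
    intro x
    exact Or.inr ⟨norm_term_le2 _ _ _ _ _, by omega⟩
  have hT' : Summable T' := by
    apply summable_aux ha T' (fun x => x.1)
    intro x
    by_cases h : x.2 < x.1
    · exact Or.inr ⟨by rw [hT'_def]; simp only [if_pos h]; exact norm_term_le2 _ _ _ _ _,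
        by omega⟩
    · exact Or.inl (by rw [hT'_def]; simp only [if_neg h])
  have hT'fiber : ∀ k, Summable (fun i => T' (k, i)) := by
    intro k
    apply summable_of_ne_finset_zero (s := Finset.range k)
    intro i hi
    rw [hT'_def]
    exact if_neg (by simpa using hi)
  -- step 1: termwise geometric identity and pulling out (z - α)
  have hsz := summable_term ha z
  have hsα := summable_term ha α
  have hinner : ∀ i, Summable fun j => a (i + 1 + j) * α ^ j := fun i => by
    simpa using summable_inner ha i (1 : ℤ_[p]) α
  have hf1 : Summable (fun k => ∑ i ∈ Finset.range k, a k * z ^ i * α ^ (k - 1 - i)) := by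
    apply NonarchimedeanAddGroup.summable_of_tendsto_cofinite_zero
    rw [Nat.cofinite_eq_atTop]
    refine squeeze_zero_norm (fun k => ?_) ha
    exact IsUltrametricDist.norm_sum_le_of_forall_le_of_nonneg (norm_nonneg _)
      (fun i _ => norm_term_le2 _ _ _ _ _)
  rw [← Summable.tsum_sub hsz hsα]
  have step1 : ∀ k, a k * z ^ k - a k * α ^ k
      = (z - α) * ∑ i ∈ Finset.range k, a k * z ^ i * α ^ (k - 1 - i) := by
    intro k
    rw [← mul_sub, ← geom_sum₂_mul z α k, Finset.sum_mul, Finset.mul_sum, Finset.mul_sum]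
    exact Finset.sum_congr rfl fun i _ => by ring
  calc ∑' k, (a k * z ^ k - a k * α ^ k)
      = ∑' k, (z - α) * ∑ i ∈ Finset.range k, a k * z ^ i * α ^ (k - 1 - i) :=
        tsum_congr step1
    _ = (z - α) * ∑' k, ∑ i ∈ Finset.range k, a k * z ^ i * α ^ (k - 1 - i) := hf1.tsum_mul_left _
    _ = (z - α) * ∑' k, ∑' i, T' (k, i) := by
        congr 1
        refine tsum_congr fun k => ?_
        rw [tsum_eq_sum (s := Finset.range k) (fun i hi => by
          rw [hT'_def]; exact if_neg (by simpa using hi))]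
        exact Finset.sum_congr rfl fun i hi => by
          rw [hT'_def]; exact (if_pos (Finset.mem_range.mp hi)).symm
    _ = (z - α) * ∑' x : ℕ × ℕ, T' x := by rw [Summable.tsum_prod' hT' hT'fiber]
    _ = (z - α) * ∑' x : ℕ × ℕ, T x := by
        congr 1
        have hinj : Function.Injective (fun x : ℕ × ℕ => ((x.1 + 1 + x.2, x.1) : ℕ × ℕ)) := by
          intro x y h
          rw [Prod.mk.injEq] at h
          exact Prod.ext (h.2) (by omega)
        have hsupp : Function.support T' ⊆
            Set.range (fun x : ℕ × ℕ => ((x.1 + 1 + x.2, x.1) : ℕ × ℕ)) := by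
          intro x hx
          rw [Function.mem_support, hT'_def] at hx
          have h2 : x.2 < x.1 := by by_contra hc; exact hx (if_neg hc)
          obtain ⟨x1, x2⟩ := x
          have h2' : x2 < x1 := h2
          refine ⟨(x2, x1 - 1 - x2), ?_⟩
          show (x2 + 1 + (x1 - 1 - x2), x2) = (x1, x2)
          rw [Prod.mk.injEq]
          exact ⟨by omega, rfl⟩
        have := hinj.tsum_eq hsupp
        rw [← this]
        refine tsum_congr fun x => ?_
        rw [hT'_def, hT_def]
        simp only
        rw [if_pos (by omega : x.1 < x.1 + 1 + x.2)]
        have hxe : x.1 + 1 + x.2 - 1 - x.1 = x.2 := by omega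
        rw [hxe]
    _ = (z - α) * ∑' i, ∑' j, T (i, j) := by
        rw [Summable.tsum_prod' hT (fun i => summable_inner ha i z α)]
    _ = (z - α) * ∑' i, (∑' j, a (i + 1 + j) * α ^ j) * z ^ i := by
        congr 1
        refine tsum_congr fun i => ?_
        calc ∑' j, T (i, j) = ∑' j, (a (i + 1 + j) * α ^ j) * z ^ i :=
              tsum_congr fun j => by rw [hT_def]; ring
          _ = (∑' j, a (i + 1 + j) * α ^ j) * z ^ i := (hinner i).tsum_mul_right _

/-- Strassman induction. -/
lemma key (n : ℕ) : ∀ a : ℕ → ℤ_[p],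
    Tendsto (fun k => ‖a k‖) atTop (nhds 0) →
    a n ≠ 0 →
    (∀ k, ‖a k‖ ≤ ‖a n‖) →
    (∀ k, n < k → ‖a k‖ < ‖a n‖) →
    {z : ℤ_[p] | (∑' k : ℕ, a k * z ^ k) = 0}.Infinite → False := by
  induction n with
  | zero =>
    intro a ha hne hle hlt hS
    obtain ⟨z, hz⟩ := hS.nonempty
    rw [Set.mem_setOf_eq] at hz
    have hsum := summable_term ha z
    have h0 := Summable.tsum_eq_zero_add hsum
    rw [hz] at h0
    simp only [pow_zero, mul_one] at h0
    have ha0 : a 0 = -∑' k, a (k + 1) * z ^ (k + 1) := eq_neg_of_add_eq_zero_left h0.symm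
    have hlt' : ‖∑' k, a (k + 1) * z ^ (k + 1)‖ < ‖a 0‖ :=
      norm_tsum_lt hne fun k =>
        lt_of_le_of_lt (norm_term_le _ _ _) (hlt (k + 1) (Nat.succ_pos k))
    have heq : ‖a 0‖ = ‖∑' k, a (k + 1) * z ^ (k + 1)‖ := by rw [ha0, norm_neg]
    linarith
  | succ n IH =>
    intro a ha hne hle hlt hS
    obtain ⟨α, hα⟩ := hS.nonempty
    rw [Set.mem_setOf_eq] at hα
    set b : ℕ → ℤ_[p] := fun i => ∑' j, a (i + 1 + j) * α ^ j with hb_def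
    have hbsum : ∀ i, Summable (fun j => a (i + 1 + j) * α ^ j) := by
      intro i
      have := summable_inner ha i (1 : ℤ_[p]) α
      simpa using this
    -- norm of b n
    have hbn : ‖b n‖ = ‖a (n + 1)‖ := by
      have h0 := Summable.tsum_eq_zero_add (hbsum n)
      simp only [Nat.add_zero, pow_zero, mul_one] at h0
      have htail : ‖∑' j, a (n + 1 + (j + 1)) * α ^ (j + 1)‖ < ‖a (n + 1)‖ :=
        norm_tsum_lt hne fun j =>
          lt_of_le_of_lt (norm_term_le _ _ _) (hlt (n + 1 + (j + 1)) (by omega))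
      rw [hb_def]
      simp only
      rw [h0, IsUltrametricDist.norm_add_eq_max_of_norm_ne_norm (ne_of_gt htail)]
      exact max_eq_left htail.le
    have hbn_ne : b n ≠ 0 := by
      intro h
      rw [h, norm_zero] at hbn
      exact hne (norm_eq_zero.mp hbn.symm)
    -- bounds
    have hble : ∀ k, ‖b k‖ ≤ ‖b n‖ := by
      intro k
      rw [hbn]
      exact norm_tsum_le (norm_nonneg _) fun j =>
        le_trans (norm_term_le _ _ _) (hle (k + 1 + j))
    have hblt : ∀ k, n < k → ‖b k‖ < ‖b n‖ := by
      intro k hk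
      rw [hbn]
      exact norm_tsum_lt hne fun j =>
        lt_of_le_of_lt (norm_term_le _ _ _) (hlt (k + 1 + j) (by omega))
    -- tendsto
    have hbt : Tendsto (fun k => ‖b k‖) atTop (nhds 0) := by
      rw [Metric.tendsto_atTop]
      intro ε hε
      obtain ⟨K, hK⟩ := Metric.tendsto_atTop.mp ha (ε / 2) (half_pos hε)
      refine ⟨K, fun k hk => ?_⟩
      have hb2 : ‖b k‖ ≤ ε / 2 := by
        refine norm_tsum_le (le_of_lt (half_pos hε)) fun j => ?_
        refine le_trans (norm_term_le _ _ _) ?_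
        have := hK (k + 1 + j) (by omega)
        rw [Real.dist_eq, sub_zero, abs_of_nonneg (norm_nonneg _)] at this
        exact this.le
      rw [Real.dist_eq, sub_zero, abs_of_nonneg (norm_nonneg _)]
      linarith
    -- zeros of g
    have hsub : {z : ℤ_[p] | (∑' k : ℕ, a k * z ^ k) = 0} \ {α} ⊆
        {z : ℤ_[p] | (∑' k : ℕ, b k * z ^ k) = 0} := by
      rintro z ⟨hz, hzα⟩
      rw [Set.mem_setOf_eq] at hz ⊢
      have hf := factor ha z α
      rw [hz, hα, sub_zero] at hf
      rcases mul_eq_zero.mp hf.symm with h | h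
      · exact absurd (sub_eq_zero.mp h) (by simpa using hzα)
      · exact h
    have hS' : {z : ℤ_[p] | (∑' k : ℕ, b k * z ^ k) = 0}.Infinite :=
      Set.Infinite.mono hsub (hS.diff (Set.finite_singleton α))
    exact IH b hbt hbn_ne hble hblt hS'

lemma exists_max_index {a : ℕ → ℤ_[p]} (ha : Tendsto (fun k => ‖a k‖) atTop (nhds 0))
    (hne : a ≠ 0) :
    ∃ n, a n ≠ 0 ∧ (∀ k, ‖a k‖ ≤ ‖a n‖) ∧ ∀ k, n < k → ‖a k‖ < ‖a n‖ := by
  obtain ⟨k₀, hk₀⟩ := Function.ne_iff.mp hne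
  have hk₀pos : 0 < ‖a k₀‖ := by simpa [norm_pos_iff] using hk₀
  obtain ⟨K, hK⟩ := Metric.tendsto_atTop.mp ha (‖a k₀‖) hk₀pos
  have hK' : ∀ m, K ≤ m → ‖a m‖ < ‖a k₀‖ := fun m hm => by
    have := hK m hm
    rwa [Real.dist_eq, sub_zero, abs_of_nonneg (norm_nonneg _)] at this
  have hsne : (insert k₀ (Finset.range K)).Nonempty := ⟨k₀, Finset.mem_insert_self _ _⟩
  obtain ⟨n₀, hn₀mem, hn₀⟩ :=
    Finset.exists_max_image (insert k₀ (Finset.range K)) (fun k => ‖a k‖) hsne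
  have hmax : ∀ m, ‖a m‖ ≤ ‖a n₀‖ := by
    intro m
    by_cases hm : m ∈ insert k₀ (Finset.range K)
    · exact hn₀ m hm
    · have hKm : K ≤ m := by
        by_contra h
        exact hm (Finset.mem_insert_of_mem (Finset.mem_range.mpr (by omega)))
      exact le_trans (hK' m hKm).le (hn₀ k₀ (Finset.mem_insert_self _ _))
  have hn₀pos : 0 < ‖a n₀‖ := lt_of_lt_of_le hk₀pos (hn₀ k₀ (Finset.mem_insert_self _ _))
  have hfin : {k : ℕ | ‖a n₀‖ ≤ ‖a k‖}.Finite := by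
    obtain ⟨K₂, hK₂⟩ := Metric.tendsto_atTop.mp ha (‖a n₀‖) hn₀pos
    apply Set.Finite.subset (Set.finite_Iio K₂)
    intro k hk
    by_contra hc
    have h1 := hK₂ k (le_of_not_gt hc)
    rw [Real.dist_eq, sub_zero, abs_of_nonneg (norm_nonneg _)] at h1
    exact absurd (lt_of_le_of_lt hk h1) (lt_irrefl _)
  have hmem : n₀ ∈ hfin.toFinset := by simp [Set.Finite.mem_toFinset]
  set N := hfin.toFinset.max' ⟨n₀, hmem⟩ with hN
  have hNmem : N ∈ hfin.toFinset := hfin.toFinset.max'_mem _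
  have hNle : ‖a n₀‖ ≤ ‖a N‖ := by simpa [Set.Finite.mem_toFinset] using hNmem
  have hNeq : ‖a N‖ = ‖a n₀‖ := le_antisymm (hmax N) hNle
  refine ⟨N, ?_, ?_, ?_⟩
  · rw [← norm_pos_iff]
    rw [hNeq]
    exact hn₀pos
  · intro k
    rw [hNeq]
    exact hmax k
  · intro k hk
    rw [hNeq]
    rcases lt_or_ge (‖a k‖) (‖a n₀‖) with h | h
    · exact h
    · exfalso
      have hkmem : k ∈ hfin.toFinset := by simpa [Set.Finite.mem_toFinset] using h
      have := hfin.toFinset.le_max' k hkmem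
      omega

end Stmt7Aux

/-- Strassman's theorem: a not-identically-zero power series with coefficients in `ℤ_p`
tending to zero has finitely many zeros in `ℤ_p`; consequently, if it has infinitely many
zeros it is identically zero. -/
theorem stmt7 (p : ℕ) [Fact p.Prime] (a : ℕ → ℤ_[p])
    (ha : Filter.Tendsto (fun k => ‖a k‖) Filter.atTop (nhds 0)) :
    (a ≠ 0 → {z : ℤ_[p] | (∑' k : ℕ, a k * z ^ k) = 0}.Finite) ∧
    ({z : ℤ_[p] | (∑' k : ℕ, a k * z ^ k) = 0}.Infinite → a = 0) := by
  have main : a ≠ 0 → {z : ℤ_[p] | (∑' k : ℕ, a k * z ^ k) = 0}.Infinite → False := by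
    intro hne hS
    obtain ⟨n, h1, h2, h3⟩ := Stmt7Aux.exists_max_index ha hne
    exact Stmt7Aux.key n a ha h1 h2 h3 hS
  constructor
  · intro hne
    by_contra hfin
    exact main hne hfin
  · intro hinf
    by_contra hne
    exact main hne hinf
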